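/- arXiv:2508.01632 — 2 statements merged into one kernel-verified Lean document; each statement's English description precedes it below -/
import Mathlib

section
/- For every integer k ≥ 2 and every r ∈ (0,1) small enough that all iterated logarithms log^{(0)} r, …, log^{(k-1)} r are positive, the Laplacian of the k-th iterated logarithm satisfies Δ(log^{(k)} r) = ( -∏_{j=1}^{k-1} log^{(j)} r − ∑_{l=1}^{k-1} ∏_{j=l+1}^{k-1} log^{(j)} r ) / ( r · ∏_{j=0}^{k-1} log^{(j)} r )², where the empty product ∏_{j=k}^{k-1} equals 1. -/
/-- The iterated logarithm: `itlog 0 r = |log r| = -log r` (for `r ∈ (0,1)`),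
and `itlog (ℓ+1) r = log (itlog ℓ r)`. -/
noncomputable def itlog : ℕ → ℝ → ℝ
  | 0, r => -Real.log r
  | (n + 1), r => Real.log (itlog n r)

/-- The standard Laplacian on `ℝ² ≅ ℂ`:
`Δf(z) = ∂²f/∂x²(z) + ∂²f/∂y²(z)`. -/
noncomputable def pLaplacian (f : ℂ → ℝ) (z : ℂ) : ℝ :=
  iteratedDeriv 2 (fun x : ℝ => f ((x : ℂ) + (z.im : ℂ) * Complex.I)) z.re +
  iteratedDeriv 2 (fun y : ℝ => f ((z.re : ℂ) + (y : ℂ) * Complex.I)) z.im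

noncomputable def itQ (k : ℕ) (r : ℝ) : ℝ := r * ∏ j ∈ Finset.range k, itlog j r

noncomputable def itc (k : ℕ) (r : ℝ) : ℝ :=
  ∏ j ∈ Finset.range k, itlog j r
    - ∑ l ∈ Finset.range k, ∏ j ∈ Finset.Ico (l + 1) k, itlog j r

lemma itQ_pos {k : ℕ} {r : ℝ} (hr : 0 < r) (hpos : ∀ j < k, 0 < itlog j r) : 0 < itQ k r :=
  mul_pos hr (Finset.prod_pos fun j hj => hpos j (Finset.mem_range.mp hj))

lemma itlog_hasDerivAt (k : ℕ) {r : ℝ} (hr : 0 < r) (hpos : ∀ j < k, 0 < itlog j r) :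
    HasDerivAt (itlog k) (-(itQ k r)⁻¹) r := by
  induction k with
  | zero =>
    have := (Real.hasDerivAt_log hr.ne').neg
    have e : itlog 0 = -Real.log := by funext x; simp [itlog]
    rw [e]
    simpa [itQ] using this
  | succ n ih =>
    have h1 : HasDerivAt (itlog n) (-(itQ n r)⁻¹) r :=
      ih fun j hj => hpos j (hj.trans (Nat.lt_succ_self n))
    have h2 := (Real.hasDerivAt_log (hpos n (Nat.lt_succ_self n)).ne').comp r h1
    have : (fun r => Real.log (itlog n r)) = itlog (n + 1) := by
      funext r; simp [itlog]
    rw [Function.comp_def, this] at h2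
    refine h2.congr_deriv ?_
    rw [itQ, itQ, Finset.prod_range_succ]
    field_simp

lemma itQ_hasDerivAt (k : ℕ) {r : ℝ} (hr : 0 < r) (hpos : ∀ j < k, 0 < itlog j r) :
    HasDerivAt (itQ k) (itc k r) r := by
  induction k with
  | zero =>
    have h : itQ 0 = fun r : ℝ => r := by funext r; simp [itQ]
    rw [h]
    simpa [itc] using hasDerivAt_id' r
  | succ n ih =>
    have hp : ∀ j < n, 0 < itlog j r := fun j hj => hpos j (hj.trans (Nat.lt_succ_self n))
    have h1 : HasDerivAt (itQ n) (itc n r) r := ih hp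
    have h2 := itlog_hasDerivAt n hr hp
    have hQ : HasDerivAt (fun r => itQ n r * itlog n r)
        (itc n r * itlog n r + itQ n r * -(itQ n r)⁻¹) r := h1.mul h2
    have hfun : (fun r => itQ n r * itlog n r) = itQ (n + 1) := by
      funext r; rw [itQ, itQ, Finset.prod_range_succ]; ring
    rw [hfun] at hQ
    convert hQ using 1
    have hQne : itQ n r ≠ 0 := (itQ_pos hr hp).ne'
    rw [mul_neg, mul_inv_cancel₀ hQne]
    rw [itc, itc, Finset.prod_range_succ, Finset.sum_range_succ]
    have hIco : ∀ l ∈ Finset.range n, (∏ j ∈ Finset.Ico (l + 1) (n + 1), itlog j r)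
        = (∏ j ∈ Finset.Ico (l + 1) n, itlog j r) * itlog n r := by
      intro l hl
      exact Finset.prod_Ico_succ_top (Nat.succ_le_of_lt (Finset.mem_range.mp hl)) _
    rw [Finset.sum_congr rfl hIco, Finset.Ico_self, Finset.prod_empty, ← Finset.sum_mul]
    ring

open Filter in
lemma itlog_eventually (k : ℕ) {r₀ : ℝ} (hr : 0 < r₀) (hpos : ∀ j < k, 0 < itlog j r₀) :
    ∀ᶠ r in nhds r₀, 0 < r ∧ ∀ j < k, 0 < itlog j r := by
  have h1 : ∀ᶠ r in nhds r₀, 0 < r := eventually_gt_nhds hr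
  have h2 : ∀ᶠ r in nhds r₀, ∀ j ∈ Finset.range k, 0 < itlog j r := by
    rw [eventually_all_finset]
    intro j hj
    have hj' := Finset.mem_range.mp hj
    have hc : ContinuousAt (itlog j) r₀ :=
      (itlog_hasDerivAt j hr fun i hi => hpos i (hi.trans hj')).continuousAt
    exact ContinuousAt.eventually_lt continuousAt_const hc (hpos j hj')
  filter_upwards [h1, h2] with r ha hb
  exact ⟨ha, fun j hj => hb j (Finset.mem_range.mpr hj)⟩

lemma rho_hasDerivAt {b : ℝ} {x : ℝ} (hx : 0 < Real.sqrt (x ^ 2 + b ^ 2)) :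
    HasDerivAt (fun x => Real.sqrt (x ^ 2 + b ^ 2)) (x / Real.sqrt (x ^ 2 + b ^ 2)) x := by
  have hq : HasDerivAt (fun x : ℝ => x ^ 2 + b ^ 2) (2 * x) x := by
    simpa using (hasDerivAt_pow 2 x).add_const (b ^ 2)
  have hne : x ^ 2 + b ^ 2 ≠ 0 := (Real.sqrt_pos.mp hx).ne'
  have := (Real.hasDerivAt_sqrt hne).comp x hq
  refine this.congr_deriv ?_
  field_simp

open Filter Real in
lemma line_deriv2 (k : ℕ) (a b r : ℝ) (hab : Real.sqrt (a ^ 2 + b ^ 2) = r) (hr : 0 < r)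
    (hpos : ∀ j < k, 0 < itlog j r) :
    deriv (deriv (fun x => itlog k (Real.sqrt (x ^ 2 + b ^ 2)))) a =
      -(r * itQ k r)⁻¹ + a ^ 2 * (itQ k r + r * itc k r) / (r * (r * itQ k r) ^ 2) := by
  set ρ : ℝ → ℝ := fun x => Real.sqrt (x ^ 2 + b ^ 2) with hρ
  have hρa : ρ a = r := hab
  have hcρ : ContinuousAt ρ a := by
    exact (Real.continuous_sqrt.comp (by continuity)).continuousAt
  have hev : ∀ᶠ x in nhds a, 0 < ρ x ∧ ∀ j < k, 0 < itlog j (ρ x) := by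
    have ht : Filter.Tendsto ρ (nhds a) (nhds r) := hρa ▸ hcρ
    exact ht.eventually (itlog_eventually k hr hpos)
  set F : ℝ → ℝ := fun x => -x * (ρ x * itQ k (ρ x))⁻¹ with hF
  have hf : ∀ x, (0 < ρ x ∧ ∀ j < k, 0 < itlog j (ρ x)) →
      HasDerivAt (fun x => itlog k (ρ x)) (F x) x := by
    intro x hx
    have h1 := (itlog_hasDerivAt k hx.1 hx.2).comp x (rho_hasDerivAt hx.1)
    rw [Function.comp_def] at h1
    refine h1.congr_deriv ?_
    simp only [hρ, mul_inv, div_eq_mul_inv]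
    ring
  have hde : deriv (fun x => itlog k (ρ x)) =ᶠ[nhds a] F :=
    hev.mono fun x hx => (hf x hx).deriv
  have key : deriv (deriv (fun x => itlog k (ρ x))) a = deriv F a := hde.deriv_eq
  have hρda : HasDerivAt ρ (a / r) a := by
    have h0 : 0 < Real.sqrt (a ^ 2 + b ^ 2) := by rw [hab]; exact hr
    have := rho_hasDerivAt (b := b) (x := a) h0
    rw [hab] at this
    exact this
  have hQρ : HasDerivAt (fun x => itQ k (ρ x)) (itc k r * (a / r)) a := by
    have h := (itQ_hasDerivAt k (r := ρ a) (by rw [hρa]; exact hr)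
      (by rw [hρa]; exact hpos)).comp a hρda
    rw [Function.comp_def, hρa] at h
    exact h
  have hD : HasDerivAt (fun x => ρ x * itQ k (ρ x))
      (a / r * itQ k r + r * (itc k r * (a / r))) a := by
    have := hρda.mul hQρ
    rwa [hρa] at this
  have hQpos : 0 < itQ k r := itQ_pos hr hpos
  have hDne : ρ a * itQ k (ρ a) ≠ 0 := by
    rw [hρa]; positivity
  have hFd : HasDerivAt F
      (-1 * (ρ a * itQ k (ρ a))⁻¹ +
        -a * (-(a / r * itQ k r + r * (itc k r * (a / r))) / (ρ a * itQ k (ρ a)) ^ 2)) a := by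
    exact ((hasDerivAt_id a).neg.mul (hD.inv hDne))
  rw [key, hFd.deriv, hρa]
  have h1 : r ≠ 0 := hr.ne'
  have h2 : itQ k r ≠ 0 := hQpos.ne'
  field_simp

/-- For every `k ≥ 2` and every point `z` of the punctured unit disk with `r = |z|` small
enough that all iterated logarithms `log⁽⁰⁾ r, …, log⁽ᵏ⁻¹⁾ r` are positive,
`Δ(log⁽ᵏ⁾ r) = (-∏_{j=1}^{k-1} log⁽ʲ⁾ r − ∑_{l=1}^{k-1} ∏_{j=l+1}^{k-1} log⁽ʲ⁾ r)
  / (r · ∏_{j=0}^{k-1} log⁽ʲ⁾ r)²`, where the empty product equals `1`. -/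
theorem stmt2 (k : ℕ) (hk : 2 ≤ k) (z : ℂ)
    (hr0 : 0 < ‖z‖) (hr1 : ‖z‖ < 1)
    (hpos : ∀ j < k, 0 < itlog j (‖z‖)) :
    pLaplacian (fun w => itlog k (‖w‖)) z =
      (-(∏ j ∈ Finset.Ico 1 k, itlog j (‖z‖))
          - ∑ l ∈ Finset.Ico 1 k, ∏ j ∈ Finset.Ico (l + 1) k, itlog j (‖z‖))
        / (‖z‖ * ∏ j ∈ Finset.range k, itlog j (‖z‖)) ^ 2 := by
  set r := ‖z‖ with hrdef
  set a := z.re with hadef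
  set b := z.im with hbdef
  have hab : Real.sqrt (a ^ 2 + b ^ 2) = r := by
    rw [hrdef, Complex.norm_def, Complex.normSq_apply]
    congr 1
    ring
  have hba : Real.sqrt (b ^ 2 + a ^ 2) = r := by rw [← hab]; congr 1; ring
  have hfun1 : (fun x : ℝ => itlog k (‖(x : ℂ) + (b : ℂ) * Complex.I‖))
      = fun x : ℝ => itlog k (Real.sqrt (x ^ 2 + b ^ 2)) := by
    funext x; rw [Complex.norm_add_mul_I]
  have hfun2 : (fun y : ℝ => itlog k (‖(a : ℂ) + (y : ℂ) * Complex.I‖))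
      = fun y : ℝ => itlog k (Real.sqrt (y ^ 2 + a ^ 2)) := by
    funext y; rw [Complex.norm_add_mul_I]; congr 1; rw [add_comm]
  have hit2 : ∀ f : ℝ → ℝ, iteratedDeriv 2 f = deriv (deriv f) := by
    intro f
    rw [iteratedDeriv_succ, iteratedDeriv_one]
  rw [pLaplacian, hit2, hit2, hfun1, hfun2,
    line_deriv2 k a b r hab hr0 hpos, line_deriv2 k b a r hba hr0 hpos]
  -- algebra
  have hsum : b ^ 2 = r ^ 2 - a ^ 2 := by
    have : a ^ 2 + b ^ 2 = r ^ 2 := by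
      rw [← hab]; rw [Real.sq_sqrt (by positivity)]
    linarith
  have hnum : (-(∏ j ∈ Finset.Ico 1 k, itlog j r)
      - ∑ l ∈ Finset.Ico 1 k, ∏ j ∈ Finset.Ico (l + 1) k, itlog j r)
      = itc k r - ∏ j ∈ Finset.range k, itlog j r := by
    rw [itc]
    have h0k : 0 < k := lt_of_lt_of_le (by norm_num) hk
    rw [Finset.range_eq_Ico, Finset.sum_eq_sum_Ico_succ_bot h0k]
    rw [← Finset.range_eq_Ico]
    simp only [Nat.zero_add]
    ring
  have hQ : (∏ j ∈ Finset.range k, itlog j r) ≠ 0 :=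
    (Finset.prod_pos fun j hj => hpos j (Finset.mem_range.mp hj)).ne'
  have hitQ : itQ k r = r * ∏ j ∈ Finset.range k, itlog j r := rfl
  rw [hnum, hitQ, hsum]
  have hr : r ≠ 0 := hr0.ne'
  field_simp
  ring
end

section
/- Let f be a smooth function on a punctured disk B_R(p)∖{p} ⊂ ℝ² whose gradient is square-integrable: ∫_{B_R(p)∖{p}} ((∂_x f)² + (∂_y f)²) dx dy < ∞. Then liminf_{ε→0} ε ∫₀^{2π} |∂_r f(p + ε e^{iθ})| dθ = 0, where ∂_r is the radial derivative centered at p. -/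
open MeasureTheory

/-- The partial derivative `∂_x f` on `ℝ² ≅ ℂ`. -/
noncomputable def pdx (f : ℂ → ℝ) (z : ℂ) : ℝ :=
  deriv (fun x : ℝ => f ((x : ℂ) + (z.im : ℂ) * Complex.I)) z.re

/-- The partial derivative `∂_y f` on `ℝ² ≅ ℂ`. -/
noncomputable def pdy (f : ℂ → ℝ) (z : ℂ) : ℝ :=
  deriv (fun y : ℝ => f ((z.re : ℂ) + (y : ℂ) * Complex.I)) z.im

/-- The radial derivative `∂_r f` centered at `p`, evaluated at the point
`p + ρ e^{iθ}`. -/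
noncomputable def pdr (f : ℂ → ℝ) (p : ℂ) (ρ θ : ℝ) : ℝ :=
  deriv (fun s : ℝ => f (p + (s : ℂ) * Complex.exp ((θ : ℂ) * Complex.I))) ρ

open Set Filter

/-- `pdr` is `2π`-periodic in `θ`. -/
lemma pdr_periodic_aux (f : ℂ → ℝ) (p : ℂ) (r : ℝ) :
    Function.Periodic (fun θ => pdr f p r θ) (2 * Real.pi) := by
  intro θ
  simp only [pdr]
  have : ((θ + 2 * Real.pi : ℝ) : ℂ) * Complex.I
      = (θ:ℂ) * Complex.I + 2 * Real.pi * Complex.I := by push_cast; ring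
  rw [this, Complex.exp_add, Complex.exp_two_pi_mul_I, mul_one]

/-- Cauchy–Schwarz for interval integrals. -/
lemma cs_interval_aux (u : ℝ → ℝ) (T : ℝ) (hT : 0 ≤ T)
    (h1 : IntervalIntegrable u volume 0 T)
    (h2 : IntervalIntegrable (fun t => u t ^ 2) volume 0 T) :
    (∫ t in (0:ℝ)..T, |u t|) ^ 2 ≤ T * ∫ t in (0:ℝ)..T, u t ^ 2 := by
  rcases eq_or_lt_of_le hT with rfl | hT'
  · simp
  set A := ∫ t in (0:ℝ)..T, |u t| with hA
  set B := ∫ t in (0:ℝ)..T, u t ^ 2 with hB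
  have habs : IntervalIntegrable (fun t => |u t|) volume 0 T := h1.abs
  have key : (0:ℝ) ≤ ∫ t in (0:ℝ)..T, ((|u t| - A/T)^2) :=
    intervalIntegral.integral_nonneg hT (fun _ _ => sq_nonneg _)
  have expand : (fun t => (|u t| - A/T)^2)
      = fun t => (u t ^ 2 - (2*(A/T)) * |u t|) + (A/T)^2 := by
    funext t; rw [sub_sq, _root_.sq_abs]; ring
  rw [expand, intervalIntegral.integral_add (h2.sub (habs.const_mul _)) intervalIntegrable_const,
    intervalIntegral.integral_sub h2 (habs.const_mul _),
    intervalIntegral.integral_const_mul, intervalIntegral.integral_const] at key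
  have hc : A / T * T = A := div_mul_cancel₀ A (ne_of_gt hT')
  rw [smul_eq_mul] at key
  nlinarith [key, hc, hT', sq_nonneg (A/T)]

/-- If `h` is integrable on `(0,R)` then `r * h r ≤ c` frequently as `r → 0⁺`. -/
lemma freq_aux (R : ℝ) (hR : 0 < R) (h : ℝ → ℝ) (hh : IntegrableOn h (Ioo 0 R) volume)
    (c : ℝ) (hc : 0 < c) : ∃ᶠ r in nhdsWithin 0 (Ioi 0), r * h r ≤ c := by
  by_contra hcon
  rw [Filter.not_frequently] at hcon
  obtain ⟨δ, hδmem, hδ⟩ := mem_nhdsGT_iff_exists_Ioo_subset.1 hcon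
  have hδ0 : 0 < δ := hδmem
  set δ' := min δ R with hδ'
  have hδ'0 : 0 < δ' := lt_min hδ0 hR
  have hint : IntegrableOn h (Ioo 0 δ') volume :=
    hh.mono_set (Ioo_subset_Ioo_right (min_le_right _ _))
  have hci : IntegrableOn (fun r => c * r⁻¹) (Ioo 0 δ') volume := by
    apply MeasureTheory.Integrable.mono hint
      ((measurable_const.mul measurable_inv).aestronglyMeasurable)
    filter_upwards [ae_restrict_mem measurableSet_Ioo] with r hr
    have h1 : ¬ (r * h r ≤ c) := hδ ⟨hr.1, lt_of_lt_of_le hr.2 (min_le_left _ _)⟩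
    have h2 : c < r * h r := not_le.1 h1
    have hr0 : 0 < r := hr.1
    have h3 : c * r⁻¹ < h r := by
      rw [mul_inv_lt_iff₀ hr0]; linarith [h2]
    rw [Real.norm_eq_abs, Real.norm_eq_abs]
    show |c * r⁻¹| ≤ |h r|
    rw [abs_of_pos (mul_pos hc (inv_pos.2 hr0))]
    exact le_trans h3.le (le_abs_self _)
  have h4 := hci.const_mul c⁻¹
  have h5 : (fun r : ℝ => c⁻¹ * (c * r⁻¹)) = fun r : ℝ => r⁻¹ := by
    funext r; field_simp
  rw [h5] at h4
  have h6 : IntegrableOn (fun x : ℝ => x ^ (-1:ℝ)) (Ioo 0 δ') volume := by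
    apply IntegrableOn.congr_fun
      (h4 : IntegrableOn (fun r : ℝ => r⁻¹) (Ioo 0 δ') volume) _ measurableSet_Ioo
    intro x hx
    simp [Real.rpow_neg_one]
  rw [intervalIntegral.integrableOn_Ioo_rpow_iff hδ'0] at h6
  norm_num at h6

/-- Polar-coordinates integrability transfer. -/
lemma polar_integrable_aux (p : ℂ) (R : ℝ) (g : ℂ → ℝ) (hg : Integrable g volume) :
    IntegrableOn (fun q : ℝ × ℝ => q.1 * g (p + (q.1:ℂ) * Complex.exp ((q.2:ℂ) * Complex.I)))
      (Ioo 0 R ×ˢ Ioo (-Real.pi) Real.pi) volume := by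
  have h1 : Integrable (fun z : ℂ => g (p + z)) volume := by
    have := (measurePreserving_add_left (volume : Measure ℂ) p).integrable_comp_emb
      (MeasurableEquiv.addLeft p).measurableEmbedding (g := g)
    simpa [Function.comp_def] using this.2 hg
  have h2 : Integrable (fun q : ℝ × ℝ => g (p + ((q.1:ℂ) + (q.2:ℂ) * Complex.I))) volume := by
    have := (Complex.volume_preserving_equiv_real_prod.symm).integrable_comp_emb
      (Complex.measurableEquivRealProd.symm.measurableEmbedding)
      (g := fun z : ℂ => g (p + z))
    have h3 := this.2 h1
    have he : ∀ v : ℝ × ℝ,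
        Complex.measurableEquivRealProd.symm v = (v.1:ℂ) + (v.2:ℂ) * Complex.I := by
      intro v; simp [Complex.measurableEquivRealProd, Complex.equivRealProdCLM_symm_apply]
    simpa only [Function.comp_def, he] using h3
  set s : Set (ℝ × ℝ) := Ioo 0 R ×ˢ Ioo (-Real.pi) Real.pi with hs
  have hsm : MeasurableSet s := (measurableSet_Ioo.prod measurableSet_Ioo)
  set B : ℝ × ℝ → ℝ × ℝ →L[ℝ] ℝ × ℝ := fun q =>
    LinearMap.toContinuousLinearMap (Matrix.toLin (Module.Basis.finTwoProd ℝ) (Module.Basis.finTwoProd ℝ)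
      !![Real.cos q.2, -q.1 * Real.sin q.2; Real.sin q.2, q.1 * Real.cos q.2]) with hB
  have hBd : ∀ q ∈ s, HasFDerivWithinAt polarCoord.symm (B q) s q := fun q _ =>
    show HasFDerivWithinAt _ (fderivPolarCoordSymm q) s q from (hasFDerivAt_polarCoord_symm q).hasFDerivWithinAt
  have B_det : ∀ q : ℝ × ℝ, (B q).det = q.1 := by
    intro q
    conv_rhs => rw [← one_mul q.1, ← Real.cos_sq_add_sin_sq q.2]
    simp only [hB, neg_mul, LinearMap.det_toContinuousLinearMap, LinearMap.det_toLin,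
      Matrix.det_fin_two_of, sub_neg_eq_add]
    ring
  have hinj : InjOn polarCoord.symm s := by
    apply polarCoord.symm.injOn.mono
    rw [OpenPartialHomeomorph.symm_source, polarCoord_target]
    exact Set.prod_mono (Ioo_subset_Ioi_self) subset_rfl
  have himg : IntegrableOn (fun v : ℝ × ℝ => g (p + ((v.1:ℂ) + (v.2:ℂ) * Complex.I)))
      (polarCoord.symm '' s) volume := h2.integrableOn
  have := (integrableOn_image_iff_integrableOn_abs_det_fderiv_smul volume hsm hBd hinj
    (fun v : ℝ × ℝ => g (p + ((v.1:ℂ) + (v.2:ℂ) * Complex.I)))).1 himg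
  apply this.congr_fun _ hsm
  intro q hq
  dsimp only
  rw [B_det, abs_of_pos hq.1.1, smul_eq_mul, polarCoord_symm_apply]
  congr 2
  push_cast
  rw [Complex.exp_mul_I]
  ring

/-- Let `f` be a smooth function on a punctured disk `B_R(p) ∖ {p} ⊂ ℝ² ≅ ℂ` whose
gradient is square-integrable, `∫_{B_R(p)∖{p}} ((∂ₓf)² + (∂ᵧf)²) < ∞`.  Then
`liminf_{ε→0⁺} ε ∫₀^{2π} |∂_r f(p + ε e^{iθ})| dθ = 0`. -/
theorem stmt8 (p : ℂ) (R : ℝ) (hR : 0 < R) (f : ℂ → ℝ)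
    (hf : ContDiffOn ℝ (⊤ : ℕ∞) f (Metric.ball p R \ {p}))
    (hgrad : IntegrableOn (fun z => pdx f z ^ 2 + pdy f z ^ 2)
      (Metric.ball p R \ {p}) volume) :
    Filter.liminf (fun ε : ℝ => ε * ∫ θ in (0 : ℝ)..(2 * Real.pi), |pdr f p ε θ|)
      (nhdsWithin 0 (Set.Ioi 0)) = 0 := by
  have hπ : 0 < Real.pi := Real.pi_pos
  set U : Set ℂ := Metric.ball p R \ {p} with hUdef
  have hUopen : IsOpen U := Metric.isOpen_ball.sdiff isClosed_singleton
  have hUm : MeasurableSet U := hUopen.measurableSet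
  have hdiff : ∀ z ∈ U, HasFDerivAt f (fderiv ℝ f z) z := fun z hz =>
    ((hf.differentiableOn (by simp)).differentiableAt (hUopen.mem_nhds hz)).hasFDerivAt
  have hcont : ContinuousOn (fderiv ℝ f) U := hf.continuousOn_fderiv_of_isOpen hUopen (by exact_mod_cast le_top)
  have hmem : ∀ (r θ : ℝ), 0 < r → r < R →
      p + (r:ℂ) * Complex.exp ((θ:ℂ) * Complex.I) ∈ U := by
    intro r θ h1 h2
    constructor
    · rw [Metric.mem_ball, Complex.dist_eq, add_sub_cancel_left, norm_mul, Complex.norm_real,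
        Complex.norm_exp_ofReal_mul_I, mul_one, Real.norm_eq_abs, abs_of_pos h1]
      exact h2
    · intro hw
      have h3 : (r:ℂ) * Complex.exp ((θ:ℂ) * Complex.I) = 0 :=
        add_eq_left.mp (Set.eq_of_mem_singleton hw)
      rcases mul_eq_zero.mp h3 with h | h
      · exact absurd (Complex.ofReal_eq_zero.mp h) (ne_of_gt h1)
      · exact Complex.exp_ne_zero _ h
  have hpdx : ∀ z ∈ U, pdx f z = fderiv ℝ f z 1 := by
    intro z hz
    have hφ : HasDerivAt (fun x : ℝ => (x:ℂ) + (z.im:ℂ) * Complex.I) 1 z.re :=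
      (Complex.ofRealCLM.hasDerivAt).add_const _
    have hz' : ((z.re:ℂ) + (z.im:ℂ) * Complex.I) = z := Complex.re_add_im z
    have := (hz' ▸ (hdiff z hz)).comp_hasDerivAt z.re hφ
    simpa [pdx, Function.comp_def] using this.deriv
  have hpdy : ∀ z ∈ U, pdy f z = fderiv ℝ f z Complex.I := by
    intro z hz
    have hφ : HasDerivAt (fun y : ℝ => (z.re:ℂ) + (y:ℂ) * Complex.I) Complex.I z.im := by
      simpa using ((Complex.ofRealCLM.hasDerivAt).mul_const Complex.I).const_add (z.re:ℂ)
    have hz' : ((z.re:ℂ) + (z.im:ℂ) * Complex.I) = z := Complex.re_add_im z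
    have := (hz' ▸ (hdiff z hz)).comp_hasDerivAt z.im hφ
    simpa [pdy, Function.comp_def] using this.deriv
  have hpdr : ∀ (r θ : ℝ), 0 < r → r < R →
      pdr f p r θ = fderiv ℝ f (p + (r:ℂ) * Complex.exp ((θ:ℂ) * Complex.I))
        (Complex.exp ((θ:ℂ) * Complex.I)) := by
    intro r θ h1 h2
    have hφ : HasDerivAt (fun s : ℝ => p + (s : ℂ) * Complex.exp ((θ:ℂ) * Complex.I))
        (Complex.exp ((θ:ℂ) * Complex.I)) r := by
      simpa using
        ((Complex.ofRealCLM.hasDerivAt).mul_const (Complex.exp ((θ:ℂ)*Complex.I))).const_add p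
    have := (hdiff _ (hmem r θ h1 h2)).comp_hasDerivAt r hφ
    simpa [pdr, Function.comp_def] using this.deriv
  have hbound : ∀ (r θ : ℝ), 0 < r → r < R →
      (pdr f p r θ)^2 ≤ pdx f (p + (r:ℂ) * Complex.exp ((θ:ℂ)*Complex.I)) ^ 2
        + pdy f (p + (r:ℂ) * Complex.exp ((θ:ℂ)*Complex.I)) ^ 2 := by
    intro r θ h1 h2
    have hz := hmem r θ h1 h2
    rw [hpdr r θ h1 h2, hpdx _ hz, hpdy _ hz]
    set D := fderiv ℝ f (p + (r:ℂ) * Complex.exp ((θ:ℂ)*Complex.I)) with hD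
    have hexp : Complex.exp ((θ:ℂ)*Complex.I)
        = (Real.cos θ) • (1:ℂ) + (Real.sin θ) • Complex.I := by
      rw [Complex.exp_mul_I]
      push_cast
      simp [Complex.real_smul]
    rw [hexp, map_add, D.map_smul, D.map_smul, smul_eq_mul, smul_eq_mul]
    nlinarith [Real.sin_sq_add_cos_sq θ,
      sq_nonneg (Real.sin θ * D 1 - Real.cos θ * D Complex.I)]
  -- the gradient-squared function, extended by 0
  have hgint : Integrable (U.indicator fun z => pdx f z ^ 2 + pdy f z ^ 2) volume :=
    (integrable_indicator_iff hUm).2 hgrad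
  set g : ℂ → ℝ := U.indicator (fun z => pdx f z ^ 2 + pdy f z ^ 2) with hgdef
  set h : ℝ → ℝ := fun r => ∫ θ in Ioo (-Real.pi) Real.pi,
      r * g (p + (r:ℂ) * Complex.exp ((θ:ℂ) * Complex.I)) with hhdef
  have hpolar := polar_integrable_aux p R g hgint
  have hh : IntegrableOn h (Ioo 0 R) volume := by
    rw [IntegrableOn, Measure.volume_eq_prod ℝ ℝ, ← Measure.prod_restrict] at hpolar
    exact hpolar.integral_prod_left
  -- nonnegativity
  have hF0 : ∀ᶠ r in nhdsWithin (0:ℝ) (Ioi 0),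
      0 ≤ r * ∫ θ in (0:ℝ)..(2*Real.pi), |pdr f p r θ| := by
    filter_upwards [self_mem_nhdsWithin] with r hr
    exact mul_nonneg (le_of_lt hr)
      (intervalIntegral.integral_nonneg (by positivity) fun t _ => abs_nonneg _)
  -- the key frequently-small estimate
  have hfreq : ∀ c : ℝ, 0 < c → ∃ᶠ r in nhdsWithin (0:ℝ) (Ioi 0),
      r * ∫ θ in (0:ℝ)..(2*Real.pi), |pdr f p r θ| ≤ c := by
    intro c hc
    have h1 := freq_aux R hR h hh (c^2/(2*Real.pi)) (by positivity)
    have hev : ∀ᶠ r in nhdsWithin (0:ℝ) (Ioi 0), 0 < r ∧ r < R := by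
      filter_upwards [self_mem_nhdsWithin, nhdsWithin_le_nhds (Iio_mem_nhds hR)] with r hr1 hr2
      exact ⟨hr1, hr2⟩
    refine (h1.and_eventually hev).mono ?_
    rintro r ⟨hrh, hr0, hrR⟩
    set z : ℝ → ℂ := fun θ => p + (r:ℂ) * Complex.exp ((θ:ℂ) * Complex.I) with hz
    have hzc : Continuous z := by
      apply continuous_const.add (continuous_const.mul _)
      exact (Complex.continuous_ofReal.mul continuous_const).cexp
    have hDc : Continuous fun θ : ℝ => fderiv ℝ f (z θ) :=
      hcont.comp_continuous hzc (fun θ => hmem r θ hr0 hrR)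
    have hueq : (fun θ : ℝ => pdr f p r θ)
        = fun θ => (fderiv ℝ f (z θ)) (Complex.exp ((θ:ℂ) * Complex.I)) :=
      funext fun θ => hpdr r θ hr0 hrR
    have hucont : Continuous fun θ : ℝ => pdr f p r θ := by
      rw [hueq]
      exact hDc.clm_apply ((Complex.continuous_ofReal.mul continuous_const).cexp)
    have hxc : Continuous fun θ : ℝ => pdx f (z θ) := by
      have e1 : (fun θ : ℝ => pdx f (z θ)) = fun θ => (fderiv ℝ f (z θ)) 1 :=
        funext fun θ => hpdx _ (hmem r θ hr0 hrR)
      rw [e1]; exact hDc.clm_apply continuous_const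
    have hyc : Continuous fun θ : ℝ => pdy f (z θ) := by
      have e2 : (fun θ : ℝ => pdy f (z θ)) = fun θ => (fderiv ℝ f (z θ)) Complex.I :=
        funext fun θ => hpdy _ (hmem r θ hr0 hrR)
      rw [e2]; exact hDc.clm_apply continuous_const
    have hwcont : Continuous fun θ : ℝ => pdx f (z θ) ^ 2 + pdy f (z θ) ^ 2 :=
      (hxc.pow 2).add (hyc.pow 2)
    set A := ∫ θ in (0:ℝ)..(2*Real.pi), |pdr f p r θ| with hA
    have hCS : A^2 ≤ (2*Real.pi) * ∫ θ in (0:ℝ)..(2*Real.pi), (pdr f p r θ)^2 :=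
      cs_interval_aux _ _ (by positivity) (hucont.intervalIntegrable _ _)
        ((hucont.pow 2).intervalIntegrable _ _)
    have hper : Function.Periodic (fun θ => (pdr f p r θ)^2) (2*Real.pi) := by
      intro θ
      simpa using congrArg (fun t => t^2) (pdr_periodic_aux f p r θ)
    have hshift : ∫ θ in (0:ℝ)..(2*Real.pi), (pdr f p r θ)^2
        = ∫ θ in (-Real.pi)..(Real.pi), (pdr f p r θ)^2 := by
      have h2 := hper.intervalIntegral_add_eq 0 (-Real.pi)
      rw [zero_add] at h2
      have e : -Real.pi + 2*Real.pi = Real.pi := by ring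
      rw [h2, e]
    have hIoo : ∫ θ in (-Real.pi)..(Real.pi), (pdr f p r θ)^2
        = ∫ θ in Ioo (-Real.pi) Real.pi, (pdr f p r θ)^2 := by
      rw [intervalIntegral.integral_of_le (by linarith), integral_Ioc_eq_integral_Ioo]
    have hu2int : IntegrableOn (fun θ => (pdr f p r θ)^2) (Ioo (-Real.pi) Real.pi) volume :=
      ((hucont.pow 2).integrableOn_Icc).mono_set Ioo_subset_Icc_self
    have hwint : IntegrableOn (fun θ => pdx f (z θ)^2 + pdy f (z θ)^2)
        (Ioo (-Real.pi) Real.pi) volume :=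
      (hwcont.integrableOn_Icc).mono_set Ioo_subset_Icc_self
    have hmono : ∫ θ in Ioo (-Real.pi) Real.pi, (pdr f p r θ)^2
        ≤ ∫ θ in Ioo (-Real.pi) Real.pi, (pdx f (z θ)^2 + pdy f (z θ)^2) :=
      setIntegral_mono_on hu2int hwint measurableSet_Ioo (fun θ _ => hbound r θ hr0 hrR)
    have hh_eq : h r = r * ∫ θ in Ioo (-Real.pi) Real.pi, (pdx f (z θ)^2 + pdy f (z θ)^2) := by
      rw [hhdef]
      dsimp only
      rw [← MeasureTheory.integral_const_mul]
      apply setIntegral_congr_fun measurableSet_Ioo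
      intro θ _
      dsimp only
      congr 1
      exact Set.indicator_of_mem (hmem r θ hr0 hrR) _
    have hwnn : 0 ≤ ∫ θ in Ioo (-Real.pi) Real.pi, (pdx f (z θ)^2 + pdy f (z θ)^2) :=
      setIntegral_nonneg measurableSet_Ioo (fun θ _ => by positivity)
    have hA0 : 0 ≤ A :=
      intervalIntegral.integral_nonneg (by positivity) fun t _ => abs_nonneg _
    have key : (r*A)^2 ≤ c^2 := by
      have s1 : A^2 ≤ (2*Real.pi) * ∫ θ in Ioo (-Real.pi) Real.pi,
          (pdx f (z θ)^2 + pdy f (z θ)^2) := by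
        calc A^2 ≤ (2*Real.pi) * ∫ θ in (0:ℝ)..(2*Real.pi), (pdr f p r θ)^2 := hCS
          _ = (2*Real.pi) * ∫ θ in Ioo (-Real.pi) Real.pi, (pdr f p r θ)^2 := by
              rw [hshift, hIoo]
          _ ≤ (2*Real.pi) * ∫ θ in Ioo (-Real.pi) Real.pi,
              (pdx f (z θ)^2 + pdy f (z θ)^2) := by
              exact mul_le_mul_of_nonneg_left hmono (by positivity)
      have s2 : r^2 * A^2 ≤ (2*Real.pi) * (r * h r) := by
        rw [hh_eq]
        nlinarith [mul_le_mul_of_nonneg_left s1 (sq_nonneg r)]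
      have s3 : (2*Real.pi) * (r * h r) ≤ (2*Real.pi) * (c^2/(2*Real.pi)) :=
        mul_le_mul_of_nonneg_left hrh (by positivity)
      have s4 : (2*Real.pi) * (c^2/(2*Real.pi)) = c^2 := by field_simp
      nlinarith [s2, s3, s4]
    nlinarith [key, hA0, mul_nonneg hr0.le hA0, hc]
  -- conclude
  have hbdd : Filter.IsBoundedUnder (· ≥ ·) (nhdsWithin (0:ℝ) (Ioi 0))
      (fun ε : ℝ => ε * ∫ θ in (0:ℝ)..(2*Real.pi), |pdr f p ε θ|) :=
    ⟨0, by simpa [Filter.eventually_map] using hF0⟩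
  have hle : ∀ c : ℝ, 0 < c →
      Filter.liminf (fun ε : ℝ => ε * ∫ θ in (0:ℝ)..(2*Real.pi), |pdr f p ε θ|)
        (nhdsWithin 0 (Ioi 0)) ≤ c := fun c hc =>
    Filter.liminf_le_of_frequently_le (hfreq c hc) hbdd
  have h0le : 0 ≤ Filter.liminf (fun ε : ℝ => ε * ∫ θ in (0:ℝ)..(2*Real.pi), |pdr f p ε θ|)
      (nhdsWithin 0 (Ioi 0)) :=
    Filter.le_liminf_of_le (Filter.IsCoboundedUnder.of_frequently_le (hfreq 1 one_pos)) hF0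
  have hle0 : Filter.liminf (fun ε : ℝ => ε * ∫ θ in (0:ℝ)..(2*Real.pi), |pdr f p ε θ|)
      (nhdsWithin 0 (Ioi 0)) ≤ 0 :=
    le_of_forall_pos_le_add (fun ε hε => by simpa using hle ε hε)
  linarith
end
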